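/- Let V_1 ⊥ V_2 be orthogonal subspaces (with respect to the L² inner product) of a real inner product space V, with a symmetric positive semidefinite bilinear form a, and τ > 0 such that ‖v_2‖² ≥ (τ²/2)‖v_2‖_a² for all v_2 ∈ V_2. Then the energy functional E(u_1, u_2, ū_1, ū_2) = ‖(u_1 + u_2) - (ū_1 + ū_2)‖² + (τ²/2)(‖u_1 + ū_2‖_a² + ‖ū_1 + u_2‖_a²) - (τ²/2)‖u_2 - ū_2‖_a² (with u_i, ū_i ∈ V_i) is bounded below by ‖u_1 - ū_1‖² + (τ²/2)(‖u_1‖_a² + ‖ū_1‖_a² + ‖u_2‖_a² + ‖ū_2‖_a²) + τ² a(u_2, ū_1) + τ² a(u_1, ū_2), and in particular is nonnegative. -/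
import Mathlib


open RealInnerProductSpace

theorem stmt6 {V : Type*} [NormedAddCommGroup V] [InnerProductSpace ℝ V]
    (V1 V2 : Submodule ℝ V)
    (horth : ∀ v1 ∈ V1, ∀ v2 ∈ V2, ⟪v1, v2⟫ = 0)
    (a : V →ₗ[ℝ] V →ₗ[ℝ] ℝ) (hsymm : ∀ x y, a x y = a y x) (hpsd : ∀ x, 0 ≤ a x x)
    (τ : ℝ) (hτ : 0 < τ)
    (hstab : ∀ v2 ∈ V2, ‖v2‖^2 ≥ (τ^2 / 2) * a v2 v2) :
    ∀ u1 ∈ V1, ∀ w1 ∈ V1, ∀ u2 ∈ V2, ∀ w2 ∈ V2,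
      (‖(u1 + u2) - (w1 + w2)‖^2
          + (τ^2 / 2) * (a (u1 + w2) (u1 + w2) + a (w1 + u2) (w1 + u2))
          - (τ^2 / 2) * a (u2 - w2) (u2 - w2)
        ≥ ‖u1 - w1‖^2
          + (τ^2 / 2) * (a u1 u1 + a w1 w1 + a u2 u2 + a w2 w2)
          + τ^2 * a u2 w1 + τ^2 * a u1 w2) ∧
      0 ≤ ‖(u1 + u2) - (w1 + w2)‖^2
          + (τ^2 / 2) * (a (u1 + w2) (u1 + w2) + a (w1 + u2) (w1 + u2))
          - (τ^2 / 2) * a (u2 - w2) (u2 - w2) := by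
  intro u1 hu1 w1 hw1 u2 hu2 w2 hw2
  have hx : u1 - w1 ∈ V1 := sub_mem hu1 hw1
  have hy : u2 - w2 ∈ V2 := sub_mem hu2 hw2
  have h0 := horth _ hx _ hy
  have hnorm : ‖(u1 + u2) - (w1 + w2)‖^2 = ‖u1 - w1‖^2 + ‖u2 - w2‖^2 := by
    have h : (u1 + u2) - (w1 + w2) = (u1 - w1) + (u2 - w2) := by abel
    rw [h, norm_add_sq_real, h0]; ring
  have hst := hstab _ hy
  have e1 : a (u1 + w2) (u1 + w2) = a u1 u1 + 2 * a u1 w2 + a w2 w2 := by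
    simp only [map_add, LinearMap.add_apply]; rw [hsymm w2 u1]; ring
  have e2 : a (w1 + u2) (w1 + u2) = a w1 w1 + 2 * a u2 w1 + a u2 u2 := by
    simp only [map_add, LinearMap.add_apply]; rw [hsymm w1 u2]; ring
  have e3 : a (u2 - w2) (u2 - w2) = a u2 u2 - 2 * a u2 w2 + a w2 w2 := by
    simp only [map_sub, LinearMap.sub_apply]; rw [hsymm w2 u2]; ring
  have hp1 := hpsd (u1 + w2)
  have hp2 := hpsd (w1 + u2)
  have hn : (0:ℝ) ≤ ‖u1 - w1‖^2 := sq_nonneg _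
  constructor
  · rw [hnorm, e1, e2, e3]; nlinarith
  · rw [hnorm, e1, e2, e3]
    rw [e1] at hp1; rw [e2] at hp2
    nlinarith
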